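/- Let F = (f₁,…,f_k) be a k-uple of pairwise commuting holomorphic self-maps of 𝔹^q, let (𝔹^d, h, Φ) be a canonical Kobayashi hyperbolic semi-model for F, and let g be a holomorphic self-map of 𝔹^q commuting with each f_j. Then there exists a unique holomorphic self-map Γ of 𝔹^d such that Γ ∘ h = h ∘ g and Γ ∘ φ_j = φ_j ∘ Γ for all 1 ≤ j ≤ k. -/

import Mathlib

open Set Filter

noncomputable section

/-- `E q` is `ℂ^q` as a Euclidean (Hermitian) space. -/
abbrev E (q : ℕ) : Type := EuclideanSpace ℂ (Fin q)

/-- The open unit ball `𝔹^q ⊂ ℂ^q`. -/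
def B (q : ℕ) : Set (E q) := Metric.ball 0 1

/-- A holomorphic map from `𝔹^q` to `𝔹^d`: it maps the ball into the ball and is
complex differentiable on the ball. -/
def HolMap (q d : ℕ) (f : E q → E d) : Prop :=
  Set.MapsTo f (B q) (B d) ∧ DifferentiableOn ℂ f (B q)

/-- An automorphism of `𝔹^d`: a holomorphic self-map with a holomorphic inverse on the ball. -/
def IsAut (d : ℕ) (τ : E d → E d) : Prop :=
  HolMap d d τ ∧ ∃ σ : E d → E d, HolMap d d σ ∧
    Set.EqOn (σ ∘ τ) id (B d) ∧ Set.EqOn (τ ∘ σ) id (B d)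

/-- `iterT f N = f₁^{n₁} ∘ ⋯ ∘ f_k^{n_k}` for a `k`-uple `f` and a multi-index `N ∈ ℕ^k`. -/
def iterT {α : Type} {k : ℕ} (f : Fin k → α → α) (N : Fin k → ℕ) : α → α :=
  (List.ofFn fun j => (f j)^[N j]).foldr (· ∘ ·) id

/-- Pairwise commutation (on the ball) of a `k`-uple of self-maps. -/
def CommutingOn (q k : ℕ) (f : Fin k → E q → E q) : Prop :=
  ∀ i j, Set.EqOn (f i ∘ f j) (f j ∘ f i) (B q)

/-- A quasi-model with ball base for the `k`-uple `f`. -/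
def IsQuasiModel (q d k : ℕ) (f : Fin k → E q → E q) (ℓ : E q → E d)
    (τ : Fin k → E d → E d) : Prop :=
  HolMap q d ℓ ∧ (∀ j, IsAut d (τ j)) ∧
    (∀ i j, Set.EqOn (τ i ∘ τ j) (τ j ∘ τ i) (B d)) ∧
    (∀ j, Set.EqOn (ℓ ∘ f j) (τ j ∘ ℓ) (B q))

/-- A semi-model with ball base: a quasi-model with `⋃_{N ∈ ℕ^k} T^{-N}(ℓ(𝔹^q)) = 𝔹^d`,
where `T^{-N}(S)` is expressed as `{y ∈ 𝔹^d | T^N y ∈ S}`. -/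
def IsSemiModel (q d k : ℕ) (f : Fin k → E q → E q) (ℓ : E q → E d)
    (τ : Fin k → E d → E d) : Prop :=
  IsQuasiModel q d k f ℓ τ ∧
    (⋃ N : Fin k → ℕ, B d ∩ (iterT τ N) ⁻¹' (ℓ '' B q)) = B d

/-- A canonical Kobayashi hyperbolic semi-model (CSM) with ball base: a semi-model
through which every quasi-model with ball base (necessarily uniquely) factorizes. -/
def IsCSM (q d k : ℕ) (f : Fin k → E q → E q) (ℓ : E q → E d)
    (τ : Fin k → E d → E d) : Prop :=
  IsSemiModel q d k f ℓ τ ∧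
    ∀ (m : ℕ) (h : E q → E m) (φ : Fin k → E m → E m),
      IsQuasiModel q m k f h φ →
      ∃ η : E d → E m, HolMap d m η ∧ Set.EqOn (η ∘ ℓ) h (B q) ∧
        ∀ j, Set.EqOn (η ∘ τ j) (φ j ∘ η) (B d)

/-- Inverse hyperbolic tangent. -/
def arctanh (t : ℝ) : ℝ := Real.log ((1 + t) / (1 - t)) / 2

/-- The Kobayashi distance of the unit ball `𝔹^q`:
`k_{𝔹^q}(z,w) = arctanh √(1 − (1−‖z‖²)(1−‖w‖²)/|1−⟨z,w⟩|²)`. -/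
def kob (q : ℕ) (z w : E q) : ℝ :=
  arctanh (Real.sqrt (1 - ((1 - ‖z‖ ^ 2) * (1 - ‖w‖ ^ 2)) /
    ‖1 - (inner ℂ z w : ℂ)‖ ^ 2))

/-- The Kobayashi ball of center `p` and radius `r` in `𝔹^q`. -/
def Bk (q : ℕ) (p : E q) (r : ℝ) : Set (E q) := {z ∈ B q | kob q z p < r}

/-- `p ∈ ∂𝔹^q` is the Denjoy–Wolff point of `f`: the iterates of `f` converge
locally uniformly on `𝔹^q` to the constant `p`. -/
def IsDW (q : ℕ) (f : E q → E q) (p : E q) : Prop :=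
  ‖p‖ = 1 ∧
    TendstoLocallyUniformlyOn (fun n z => f^[n] z) (fun _ => p) Filter.atTop (B q)

/-- The dilation `λ = liminf_{z→p} (1−‖f(z)‖)/(1−‖z‖)` of `f` at a boundary point `p`. -/
def dilation (q : ℕ) (f : E q → E q) (p : E q) : ℝ :=
  Filter.liminf (fun z => (1 - ‖f z‖) / (1 - ‖z‖)) (nhdsWithin p (B q))

/-- The rank of the complex differential of `f` at `y`. -/
def rankAt (q d : ℕ) (f : E q → E d) (y : E q) : ℕ :=
  Module.finrank ℂ (LinearMap.range (fderiv ℂ f y).toLinearMap)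

/-- A quasi-model with ball base for a single self-map `f`. -/
def IsQuasiModel1 (q d : ℕ) (f : E q → E q) (ℓ : E q → E d) (τ : E d → E d) : Prop :=
  HolMap q d ℓ ∧ IsAut d τ ∧ Set.EqOn (ℓ ∘ f) (τ ∘ ℓ) (B q)

/-- A semi-model with ball base for a single self-map `f`. -/
def IsSemiModel1 (q d : ℕ) (f : E q → E q) (ℓ : E q → E d) (τ : E d → E d) : Prop :=
  IsQuasiModel1 q d f ℓ τ ∧ (⋃ n : ℕ, B d ∩ τ^[n] ⁻¹' (ℓ '' B q)) = B d

/-- A canonical Kobayashi hyperbolic semi-model with ball base for a single self-map `f`. -/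
def IsCSM1 (q d : ℕ) (f : E q → E q) (ℓ : E q → E d) (τ : E d → E d) : Prop :=
  IsSemiModel1 q d f ℓ τ ∧
    ∀ (m : ℕ) (h : E q → E m) (φ : E m → E m), IsQuasiModel1 q m f h φ →
      ∃ η : E d → E m, HolMap d m η ∧ Set.EqOn (η ∘ ℓ) h (B q) ∧
        Set.EqOn (η ∘ τ) (φ ∘ η) (B d)

section Helpers

variable {α : Type} {S : Set α}

lemma injOn_iterate' {φ : α → α} (hφ : Set.MapsTo φ S S) (hinj : Set.InjOn φ S) (n : ℕ) :
    Set.InjOn φ^[n] S := by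
  induction n with
  | zero => simpa using Set.injOn_id S
  | succ n ih =>
    intro x hx y hy hxy
    rw [Function.iterate_succ_apply', Function.iterate_succ_apply'] at hxy
    exact ih hx hy (hinj (hφ.iterate n hx) (hφ.iterate n hy) hxy)

lemma eqOn_comp_iterate' {Γ φ : α → α} (hφ : Set.MapsTo φ S S)
    (hc : Set.EqOn (Γ ∘ φ) (φ ∘ Γ) S) (n : ℕ) :
    Set.EqOn (Γ ∘ φ^[n]) (φ^[n] ∘ Γ) S := by
  induction n with
  | zero => intro x hx; rfl
  | succ n ih =>
    intro x hx
    have h1 : φ^[n] x ∈ S := hφ.iterate n hx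
    calc Γ (φ^[n+1] x) = Γ (φ (φ^[n] x)) := by rw [Function.iterate_succ_apply']
    _ = φ (Γ (φ^[n] x)) := hc h1
    _ = φ (φ^[n] (Γ x)) := by rw [show Γ (φ^[n] x) = φ^[n] (Γ x) from ih hx]
    _ = φ^[n+1] (Γ x) := (Function.iterate_succ_apply' φ n (Γ x)).symm

lemma foldr_mapsTo' : ∀ (L : List (α → α)), (∀ l ∈ L, Set.MapsTo l S S) →
    Set.MapsTo (L.foldr (· ∘ ·) id) S S
  | [], _ => Set.mapsTo_id S
  | a :: L, hL => by
    simp only [List.foldr_cons]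
    exact (hL a (by simp)).comp (foldr_mapsTo' L fun l hl => hL l (by simp [hl]))

lemma foldr_injOn' : ∀ (L : List (α → α)),
    (∀ l ∈ L, Set.MapsTo l S S ∧ Set.InjOn l S) →
    Set.InjOn (L.foldr (· ∘ ·) id) S
  | [], _ => Set.injOn_id S
  | a :: L, hL => by
    simp only [List.foldr_cons]
    have hM := foldr_mapsTo' L (fun l hl => (hL l (by simp [hl])).1)
    intro x hx y hy hxy
    exact foldr_injOn' L (fun l hl => hL l (by simp [hl])) hx hy
      ((hL a (by simp)).2 (hM hx) (hM hy) hxy)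

lemma foldr_comm' {Γ : α → α} :
    ∀ (L : List (α → α)), (∀ l ∈ L, Set.MapsTo l S S ∧ Set.EqOn (Γ ∘ l) (l ∘ Γ) S) →
    Set.EqOn (Γ ∘ L.foldr (· ∘ ·) id) (L.foldr (· ∘ ·) id ∘ Γ) S
  | [], _ => fun _ _ => rfl
  | a :: L, hL => by
    intro x hx
    have hM := foldr_mapsTo' L (fun l hl => (hL l (by simp [hl])).1)
    have ihc := foldr_comm' L (fun l hl => hL l (by simp [hl]))
    simp only [List.foldr_cons, Function.comp_apply]
    calc Γ (a (L.foldr (· ∘ ·) id x))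
        = a (Γ (L.foldr (· ∘ ·) id x)) := (hL a (by simp)).2 (hM hx)
      _ = a ((L.foldr (· ∘ ·) id) (Γ x)) := by
          rw [show Γ (L.foldr (· ∘ ·) id x) = (L.foldr (· ∘ ·) id) (Γ x) from ihc hx]

/-- An automorphism is injective on the ball. -/
lemma IsAut.injOn {d : ℕ} {τ : E d → E d} (hτ : IsAut d τ) : Set.InjOn τ (B d) := by
  obtain ⟨_, σ, _, hστ, _⟩ := hτ
  intro x hx y hy hxy
  have hx' : σ (τ x) = x := hστ hx
  have hy' : σ (τ y) = y := hστ hy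
  rw [← hx', ← hy', hxy]

end Helpers

/-- if `g` commutes with every `f_j`, there exists a unique holomorphic
self-map `Γ = Γ_F(g)` of the CSM base with `Γ ∘ h = h ∘ g` and `Γ ∘ φ_j = φ_j ∘ Γ`. -/
theorem exists_unique_Gamma (q d k : ℕ) (f : Fin k → E q → E q)
    (hf : ∀ j, HolMap q q (f j)) (hcomm : CommutingOn q k f)
    (h : E q → E d) (φ : Fin k → E d → E d) (hcsm : IsCSM q d k f h φ)
    (g : E q → E q) (hg : HolMap q q g)
    (hgcomm : ∀ j, Set.EqOn (f j ∘ g) (g ∘ f j) (B q)) :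
    ∃ Γ : E d → E d,
      (HolMap d d Γ ∧ Set.EqOn (Γ ∘ h) (h ∘ g) (B q) ∧
        ∀ j, Set.EqOn (Γ ∘ φ j) (φ j ∘ Γ) (B d)) ∧
      ∀ Γ' : E d → E d,
        (HolMap d d Γ' ∧ Set.EqOn (Γ' ∘ h) (h ∘ g) (B q) ∧
          ∀ j, Set.EqOn (Γ' ∘ φ j) (φ j ∘ Γ') (B d)) →
        Set.EqOn Γ' Γ (B d) := by
  obtain ⟨⟨⟨hHolh, hAut, hφcomm, hintertw⟩, hunion⟩, hfact⟩ := hcsm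
  -- (𝔹^d, h ∘ g, φ) is a quasi-model for f
  have hqm2 : IsQuasiModel q d k f (h ∘ g) φ := by
    refine ⟨⟨hHolh.1.comp hg.1, hHolh.2.comp hg.2 hg.1⟩, hAut, hφcomm, ?_⟩
    intro j z hz
    have h1 : g (f j z) = f j (g z) := (hgcomm j hz).symm
    have h2 : h (f j (g z)) = φ j (h (g z)) := hintertw j (hg.1 hz)
    simp only [Function.comp_apply] at h1 h2 ⊢
    rw [h1, h2]
  obtain ⟨Γ, hΓhol, hΓh, hΓφ⟩ := hfact d (h ∘ g) φ hqm2
  refine ⟨Γ, ⟨hΓhol, hΓh, hΓφ⟩, ?_⟩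
  rintro Γ' ⟨hΓ'hol, hΓ'h, hΓ'φ⟩
  intro y hy
  -- use the union condition to find N and z with iterT φ N y = h z
  have hy' : y ∈ ⋃ N : Fin k → ℕ, B d ∩ (iterT φ N) ⁻¹' (h '' B q) := by rw [hunion]; exact hy
  obtain ⟨N, -, hmem⟩ := Set.mem_iUnion.mp hy'
  obtain ⟨z, hz, hzy⟩ := hmem
  set L : List (E d → E d) := List.ofFn fun j => (φ j)^[N j] with hL
  have hLmem : ∀ l ∈ L, ∃ j, l = (φ j)^[N j] := by
    intro l hl
    rw [hL, List.mem_ofFn] at hl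
    obtain ⟨j, hj⟩ := hl
    exact ⟨j, hj.symm⟩
  have hLmaps : ∀ l ∈ L, Set.MapsTo l (B d) (B d) := by
    intro l hl
    obtain ⟨j, rfl⟩ := hLmem l hl
    exact ((hAut j).1.1).iterate (N j)
  have hLinj : ∀ l ∈ L, Set.MapsTo l (B d) (B d) ∧ Set.InjOn l (B d) := by
    intro l hl
    obtain ⟨j, rfl⟩ := hLmem l hl
    exact ⟨((hAut j).1.1).iterate (N j), injOn_iterate' (hAut j).1.1 (hAut j).injOn (N j)⟩
  have hT : iterT φ N = L.foldr (· ∘ ·) id := rfl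
  have hTmaps : Set.MapsTo (iterT φ N) (B d) (B d) := hT ▸ foldr_mapsTo' L hLmaps
  have hTinj : Set.InjOn (iterT φ N) (B d) := hT ▸ foldr_injOn' L hLinj
  have hTcommΓ : Set.EqOn (Γ ∘ iterT φ N) (iterT φ N ∘ Γ) (B d) := by
    rw [hT]
    refine foldr_comm' L ?_
    intro l hl
    obtain ⟨j, rfl⟩ := hLmem l hl
    exact ⟨((hAut j).1.1).iterate (N j), eqOn_comp_iterate' (hAut j).1.1 (hΓφ j) (N j)⟩
  have hTcommΓ' : Set.EqOn (Γ' ∘ iterT φ N) (iterT φ N ∘ Γ') (B d) := by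
    rw [hT]
    refine foldr_comm' L ?_
    intro l hl
    obtain ⟨j, rfl⟩ := hLmem l hl
    exact ⟨((hAut j).1.1).iterate (N j), eqOn_comp_iterate' (hAut j).1.1 (hΓ'φ j) (N j)⟩
  have key : iterT φ N (Γ' y) = iterT φ N (Γ y) := by
    have e1 : Γ' (iterT φ N y) = iterT φ N (Γ' y) := hTcommΓ' hy
    have e2 : Γ (iterT φ N y) = iterT φ N (Γ y) := hTcommΓ hy
    have e3 : Γ' (h z) = h (g z) := hΓ'h hz
    have e4 : Γ (h z) = h (g z) := hΓh hz
    rw [← e1, ← e2, ← hzy, e3, e4]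
  exact hTinj (hΓ'hol.1 hy) (hΓhol.1 hy) key
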